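/- Let G be a finite simple graph and C a set of vertices of G such that every connected component of the induced subgraph G − C is a clique. Then every shortest path in G contains at most 3·|C| + 2 vertices in total; in particular it contains at most |C| vertices of C, and the non-C vertices of the path form at most |C| + 1 maximal segments each of which lies in a single clique component of G − C and contains at most two vertices. -/

import Mathlib

open SimpleGraph

open scoped Classical

/-- `[a, b]` is a maximal segment of positions of the walk `W` whose vertices avoid `C`. -/
def IsMaxSegment {V : Type*} [DecidableEq V] {u v : V} (G : SimpleGraph V) (C : Finset V)
    (W : G.Walk u v) (a b : ℕ) : Prop :=
  a ≤ b ∧ b ≤ W.length ∧ (∀ i, a ≤ i → i ≤ b → W.getVert i ∉ C) ∧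
    (a = 0 ∨ W.getVert (a - 1) ∈ C) ∧ (b = W.length ∨ W.getVert (b + 1) ∈ C)

private lemma walk_length_drop {V : Type*} {G : SimpleGraph V} {u v : V} (p : G.Walk u v)
    (n : ℕ) : (p.drop n).length = p.length - n := by
  induction p generalizing n with
  | nil => cases n <;> simp [SimpleGraph.Walk.drop]
  | cons h q ih =>
    cases n with
    | zero => simp [SimpleGraph.Walk.drop]
    | succ n => simp [SimpleGraph.Walk.drop, ih]

private lemma walk_exists_prefix {V : Type*} {G : SimpleGraph V} {u v : V} (p : G.Walk u v)
    (n : ℕ) : ∃ q : G.Walk u (p.getVert n), q.length = min n p.length := by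
  induction p generalizing n with
  | nil =>
    exact ⟨(SimpleGraph.Walk.nil).copy rfl (SimpleGraph.Walk.getVert_of_length_le _
      (Nat.zero_le n)).symm, by simp⟩
  | cons h q ih =>
    cases n with
    | zero => exact ⟨(SimpleGraph.Walk.nil).copy rfl (SimpleGraph.Walk.getVert_zero _).symm,
        by simp⟩
    | succ n =>
      obtain ⟨r, hr⟩ := ih n
      refine ⟨SimpleGraph.Walk.cons h r, ?_⟩
      simp [hr, SimpleGraph.Walk.length_cons, Nat.succ_min_succ]

private lemma walk_getVert_inj {V : Type*} {G : SimpleGraph V} {u v : V} {p : G.Walk u v}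
    (hp : p.IsPath) : ∀ i j, i ≤ p.length → j ≤ p.length →
      p.getVert i = p.getVert j → i = j := by
  induction p with
  | nil => intro i j hi hj _; simp only [SimpleGraph.Walk.length_nil] at hi hj; omega
  | cons h q ih =>
    intro i j hi hj hij
    rw [SimpleGraph.Walk.cons_isPath_iff] at hp
    obtain ⟨hq, hu⟩ := hp
    match i, j with
    | 0, 0 => rfl
    | 0, (j+1) =>
      exfalso
      apply hu
      rw [SimpleGraph.Walk.mem_support_iff_exists_getVert]
      refine ⟨j, ?_, by simpa [SimpleGraph.Walk.length_cons] using hj⟩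
      rw [← SimpleGraph.Walk.getVert_cons_succ q h, ← hij, SimpleGraph.Walk.getVert_zero]
    | (i+1), 0 =>
      exfalso
      apply hu
      rw [SimpleGraph.Walk.mem_support_iff_exists_getVert]
      refine ⟨i, ?_, by simpa [SimpleGraph.Walk.length_cons] using hi⟩
      rw [← SimpleGraph.Walk.getVert_cons_succ q h, hij, SimpleGraph.Walk.getVert_zero]
    | (i+1), (j+1) =>
      have := ih hq i j (by simpa [SimpleGraph.Walk.length_cons] using hi)
        (by simpa [SimpleGraph.Walk.length_cons] using hj)
        (by simpa [SimpleGraph.Walk.getVert_cons_succ] using hij)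
      omega

/-- If every connected component of `G − C` is a clique, then every
shortest path `W` in `G` has at most `3|C| + 2` vertices; it has at most `|C|` vertices in
`C`, and its non-`C` vertices form at most `|C| + 1` maximal segments, each of which has at
most two vertices and lies in a single (clique) component of `G − C`. -/
theorem stmt_5 {V : Type*} [Fintype V] [DecidableEq V] (G : SimpleGraph V) (C : Finset V)
    (hclique : ∀ x y : ↥((↑C : Set V)ᶜ),
      (G.induce ((↑C : Set V)ᶜ)).Reachable x y → x ≠ y → (G.induce ((↑C : Set V)ᶜ)).Adj x y)
    (u v : V) (W : G.Walk u v) (hpath : W.IsPath) (hlen : W.length = G.dist u v) :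
    W.support.length ≤ 3 * C.card + 2 ∧
    (W.support.filter fun x => x ∈ C).length ≤ C.card ∧
    ((Finset.range (W.length + 1) ×ˢ Finset.range (W.length + 1)).filter
        fun ab => IsMaxSegment G C W ab.1 ab.2).card ≤ C.card + 1 ∧
    ∀ a b, IsMaxSegment G C W a b →
      b - a ≤ 1 ∧
      ∀ i j, a ≤ i → i ≤ b → a ≤ j → j ≤ b →
        ∀ (hi : W.getVert i ∈ ((↑C : Set V)ᶜ : Set V))
          (hj : W.getVert j ∈ ((↑C : Set V)ᶜ : Set V)),
          (G.induce ((↑C : Set V)ᶜ)).Reachable ⟨W.getVert i, hi⟩ ⟨W.getVert j, hj⟩ := by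
  have hinj := walk_getVert_inj hpath
  -- adjacency of consecutive non-C vertices, in the induced graph
  have hadjInd : ∀ i, i < W.length → ∀ (h1 : W.getVert i ∈ ((↑C : Set V)ᶜ : Set V))
      (h2 : W.getVert (i+1) ∈ ((↑C : Set V)ᶜ : Set V)),
      (G.induce ((↑C : Set V)ᶜ)).Adj ⟨W.getVert i, h1⟩ ⟨W.getVert (i+1), h2⟩ := by
    intro i hi h1 h2
    exact W.adj_getVert_succ hi
  -- no three consecutive vertices outside C
  have hNC3 : ∀ a, a + 2 ≤ W.length → W.getVert a ∉ C → W.getVert (a+1) ∉ C →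
      W.getVert (a+2) ∉ C → False := by
    intro a ha h0 h1 h2
    have hm0 : W.getVert a ∈ ((↑C : Set V)ᶜ : Set V) := h0
    have hm1 : W.getVert (a+1) ∈ ((↑C : Set V)ᶜ : Set V) := h1
    have hm2 : W.getVert (a+2) ∈ ((↑C : Set V)ᶜ : Set V) := h2
    have hA1 := hadjInd a (by omega) hm0 hm1
    have hA2 := hadjInd (a+1) (by omega) hm1 hm2
    have hreach : (G.induce ((↑C : Set V)ᶜ)).Reachable ⟨W.getVert a, hm0⟩
        ⟨W.getVert (a+2), hm2⟩ := hA1.reachable.trans hA2.reachable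
    have hne : (⟨W.getVert a, hm0⟩ : ↥((↑C : Set V)ᶜ)) ≠ ⟨W.getVert (a+2), hm2⟩ := by
      intro h
      have : W.getVert a = W.getVert (a+2) := congrArg Subtype.val h
      have := hinj a (a+2) (by omega) (by omega) this
      omega
    have hGadj : G.Adj (W.getVert a) (W.getVert (a+2)) := hclique _ _ hreach hne
    -- build a shorter walk
    obtain ⟨q, hq⟩ := walk_exists_prefix W a
    have hqlen : q.length = a := by rw [hq]; omega
    have hdrop : (W.drop (a+2)).length = W.length - (a+2) := walk_length_drop W (a+2)
    have hwalk : G.dist u v ≤ (q.append (SimpleGraph.Walk.cons hGadj (W.drop (a+2)))).length :=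
      SimpleGraph.dist_le _
    rw [SimpleGraph.Walk.length_append, SimpleGraph.Walk.length_cons, hqlen, hdrop] at hwalk
    omega
  -- maximal segments are short
  have hseg_le : ∀ a b, IsMaxSegment G C W a b → b - a ≤ 1 := by
    intro a b hs
    obtain ⟨hab, hbl, hnc, _, _⟩ := hs
    by_contra h
    exact hNC3 a (by omega) (hnc a le_rfl (by omega)) (hnc (a+1) (by omega) (by omega))
      (hnc (a+2) (by omega) (by omega))
  -- uniqueness of the right endpoint
  have hseg_unique : ∀ a b d, IsMaxSegment G C W a b → IsMaxSegment G C W a d → b = d := by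
    have key : ∀ a b d, IsMaxSegment G C W a b → IsMaxSegment G C W a d → b < d → False := by
      intro a b d hb hd hlt
      obtain ⟨hab, hbl, _, _, hmax⟩ := hb
      obtain ⟨had, hdl, hnc, _, _⟩ := hd
      rcases hmax with h | h
      · omega
      · exact hnc (b+1) (by omega) (by omega) h
    intro a b d hb hd
    rcases lt_trichotomy b d with h | h | h
    · exact absurd h (fun h => key a b d hb hd h)
    · exact h
    · exact absurd h (fun h => key a d b hd hb h)
  -- part 3 : number of maximal segments
  set S := ((Finset.range (W.length + 1) ×ˢ Finset.range (W.length + 1)).filter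
      fun ab => IsMaxSegment G C W ab.1 ab.2) with hS
  have h3 : S.card ≤ C.card + 1 := by
    set T : Finset (Option V) := insert none (C.image some) with hT
    have hTcard : T.card ≤ C.card + 1 :=
      le_trans (Finset.card_insert_le _ _) (by simp [Finset.card_image_le])
    have := Finset.card_le_card_of_injOn
      (fun ab : ℕ × ℕ => if ab.1 = 0 then none else some (W.getVert (ab.1 - 1)))
      (s := S) (t := T) ?_ ?_
    · exact le_trans this hTcard
    · intro ab hab
      rw [hS, Finset.mem_coe, Finset.mem_filter] at hab
      obtain ⟨-, hms⟩ := hab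
      by_cases h0 : ab.1 = 0
      · simp [h0, hT]
      · obtain ⟨_, _, _, hC, _⟩ := hms
        rcases hC with h | h
        · exact absurd h h0
        · simp only [h0, if_neg]
          exact Finset.mem_insert_of_mem (Finset.mem_image_of_mem some h)
    · intro ab hab cd hcd heq
      simp only [Finset.mem_coe, hS, Finset.mem_filter] at hab hcd
      obtain ⟨-, hmab⟩ := hab
      obtain ⟨-, hmcd⟩ := hcd
      have ha1 : ab.1 = cd.1 := by
        by_cases h0 : ab.1 = 0 <;> by_cases h0' : cd.1 = 0
        · omega
        · simp [h0, h0'] at heq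
        · simp [h0, h0'] at heq
        · simp only [h0, h0', if_neg] at heq
          have hval : W.getVert (ab.1 - 1) = W.getVert (cd.1 - 1) := by
            simpa using heq
          have hb1 : ab.1 ≤ W.length := le_trans hmab.1 hmab.2.1
          have hb2 : cd.1 ≤ W.length := le_trans hmcd.1 hmcd.2.1
          have := hinj (ab.1 - 1) (cd.1 - 1) (by omega) (by omega) hval
          omega
      have ha2 : ab.2 = cd.2 := hseg_unique ab.1 ab.2 cd.2 hmab (ha1 ▸ hmcd)
      exact Prod.ext ha1 ha2
  -- part 2 : vertices in C
  have h2 : (W.support.filter fun x => x ∈ C).length ≤ C.card := by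
    have hnd : (W.support.filter fun x => x ∈ C).Nodup :=
      hpath.support_nodup.filter _
    rw [← List.toFinset_card_of_nodup hnd]
    apply Finset.card_le_card
    intro x hx
    rw [List.mem_toFinset, List.mem_filter] at hx
    simpa using hx.2
  -- existence of a maximal segment through each non-C position
  have hseg_ex : ∀ i, i ≤ W.length → W.getVert i ∉ C →
      ∃ a b, IsMaxSegment G C W a b ∧ a ≤ i ∧ i ≤ b := by
    intro i hi hic
    have hPex : ∃ a, a ≤ i ∧ ∀ k, a ≤ k → k ≤ i → W.getVert k ∉ C :=
      ⟨i, le_rfl, fun k hk hk' => (le_antisymm hk' hk) ▸ hic⟩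
    set a := Nat.find hPex with haa
    obtain ⟨hai, haP⟩ := Nat.find_spec hPex
    set Q : ℕ → Prop := fun b => i ≤ b ∧ ∀ k, i ≤ k → k ≤ b → W.getVert k ∉ C with hQ
    have hQi : Q i := ⟨le_rfl, fun k hk hk' => (le_antisymm hk' hk) ▸ hic⟩
    set b := Nat.findGreatest Q W.length with hbb
    have hib : i ≤ b := Nat.le_findGreatest hi hQi
    have hbl : b ≤ W.length := Nat.findGreatest_le _
    have hQb : Q b := Nat.findGreatest_spec hi hQi
    refine ⟨a, b, ⟨le_trans hai hib, hbl, ?_, ?_, ?_⟩, hai, hib⟩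
    · intro k hk hk'
      by_cases h : k ≤ i
      · exact haP k hk h
      · exact hQb.2 k (by omega) hk'
    · by_cases h0 : a = 0
      · exact Or.inl h0
      · right
        have hmin : ¬(a - 1 ≤ i ∧ ∀ k, a - 1 ≤ k → k ≤ i → W.getVert k ∉ C) :=
          Nat.find_min hPex (by omega)
        push_neg at hmin
        obtain ⟨k, hk1, hk2, hk3⟩ := hmin (by omega)
        have : k = a - 1 := by
          by_contra h
          exact haP k (by omega) hk2 hk3
        rw [← this]
        exact hk3
    · by_cases hbW : b = W.length
      · exact Or.inl hbW
      · right
        have hmax : ¬Q (b + 1) := Nat.findGreatest_is_greatest (n := W.length) (by rw [← hbb]; omega) (by omega)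
        rw [hQ] at hmax
        simp only [not_and, not_forall, Classical.not_imp, not_not] at hmax
        obtain ⟨k, hk1, hk2, hk3⟩ := hmax (by omega)
        have : k = b + 1 := by
          by_contra h
          exact hQb.2 k hk1 (by omega) hk3
        rw [← this]
        exact hk3
  -- part 1 : total number of vertices
  have h1 : W.support.length ≤ 3 * C.card + 2 := by
    rw [SimpleGraph.Walk.length_support]
    set R := Finset.range (W.length + 1) with hR
    set Rc := R.filter (fun i => W.getVert i ∈ C) with hRc
    set Rn := R.filter (fun i => ¬ W.getVert i ∈ C) with hRn
    have hsplit : Rc.card + Rn.card = R.card :=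
      Finset.card_filter_add_card_filter_not _
    have hRcard : R.card = W.length + 1 := Finset.card_range _
    have hc : Rc.card ≤ C.card := by
      apply Finset.card_le_card_of_injOn W.getVert
      · intro i hi
        rw [hRc, Finset.mem_coe, Finset.mem_filter] at hi
        exact hi.2
      · intro i hi j hj hij
        simp only [Finset.mem_coe, hRc, Finset.mem_filter, hR, Finset.mem_range] at hi hj
        exact hinj i j (by omega) (by omega) hij
    have hn : Rn.card ≤ 2 * (C.card + 1) := by
      choose! fA fB hfseg hfa hfb using hseg_ex
      set g : ℕ → ℕ × ℕ := fun i => (fA i, fB i) with hg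
      have hmem : ∀ i ∈ Rn, i ≤ W.length ∧ W.getVert i ∉ C := by
        intro i hi
        rw [hRn, Finset.mem_filter, hR, Finset.mem_range] at hi
        exact ⟨by omega, hi.2⟩
      have himg : Rn.image g ⊆ S := by
        intro ab hab
        rw [Finset.mem_image] at hab
        obtain ⟨i, hi, hgi⟩ := hab
        obtain ⟨hil, hic⟩ := hmem i hi
        have hms := hfseg i hil hic
        rw [hS, Finset.mem_filter, Finset.mem_product, ← hgi]
        refine ⟨⟨?_, ?_⟩, hms⟩ <;> rw [Finset.mem_range]
        · show fA i < W.length + 1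
          have := le_trans hms.1 hms.2.1; omega
        · show fB i < W.length + 1
          have := hms.2.1; omega
      have hfib : Rn.card ≤ 2 * (Rn.image g).card := by
        apply Finset.card_le_mul_card_image
        intro ab hab
        rw [Finset.mem_image] at hab
        obtain ⟨i0, hi0, hgi0⟩ := hab
        obtain ⟨hil0, hic0⟩ := hmem i0 hi0
        have hms0 : IsMaxSegment G C W ab.1 ab.2 := by
          rw [← hgi0]; exact hfseg i0 hil0 hic0
        have hlen0 : ab.2 - ab.1 ≤ 1 := hseg_le _ _ hms0
        have hsub : {a ∈ Rn | g a = ab} ⊆ Finset.Icc ab.1 ab.2 := by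
          intro j hj
          rw [Finset.mem_filter] at hj
          obtain ⟨hjRn, hjg⟩ := hj
          obtain ⟨hjl, hjc⟩ := hmem j hjRn
          have h1 := hfa j hjl hjc
          have h2 := hfb j hjl hjc
          rw [Finset.mem_Icc, ← hjg]
          exact ⟨h1, h2⟩
        calc {a ∈ Rn | g a = ab}.card ≤ (Finset.Icc ab.1 ab.2).card :=
              Finset.card_le_card hsub
          _ = ab.2 + 1 - ab.1 := Nat.card_Icc _ _
          _ ≤ 2 := by have := hms0.1; omega
      calc Rn.card ≤ 2 * (Rn.image g).card := hfib
        _ ≤ 2 * S.card := by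
            have := Finset.card_le_card himg; omega
        _ ≤ 2 * (C.card + 1) := by omega
    omega
  refine ⟨h1, h2, h3, ?_⟩
  -- part 4
  intro a b hs
  refine ⟨hseg_le a b hs, ?_⟩
  intro i j hai hib haj hjb hi hj
  have hb1 : b - a ≤ 1 := hseg_le a b hs
  have hbl : b ≤ W.length := hs.2.1
  rcases lt_trichotomy i j with h | h | h
  · have hij : j = i + 1 := by omega
    subst hij
    exact (hadjInd i (by omega) hi hj).reachable
  · subst h
    rfl
  · have hij : i = j + 1 := by omega
    subst hij
    exact (hadjInd j (by omega) hj hi).reachable.symm
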